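/- arXiv:1812.02048 — 3 statements merged into one kernel-verified Lean document; each statement's English description precedes it below -/
import Mathlib

section
/- The functions α and β defined from the truncated soliton tail satisfy the unitarity relation α(λ)·α^*(λ^*) + β(λ)·β^*(λ^*) = 1 for all complex λ ≠ −jσ_1. -/
open Complex Real

private lemma key_unitarity (σ z D P Q A A' B B' : ℂ) (hD0 : D ≠ 0)
    (h1 : z + I*σ ≠ 0) (h2 : z - I*σ ≠ 0)
    (hPQ : P*Q = 1) (hA : A*A' = 1) (hB : B*B' = 1) (hDPQ : D = P + Q) :
    (1 - P/D * (2*I*σ/(z+I*σ))) * (1 - P/D * (-2*I*σ/(z-I*σ)))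
      + A*(-2*I*σ/(z+I*σ))*B/D * (A'*(2*I*σ/(z-I*σ))*B'/D) = 1 := by
  field_simp
  linear_combination (4*(I*σ)^2) * (P*hDPQ + hPQ - B*B'*hA - hB)

theorem alpha_beta_unitarity (σ₁ T t₀ φ : ℝ) (N : ℕ) (hσ : 0 < σ₁)
    (D : ℝ) (hD : D = Real.exp (-2*σ₁*(T - t₀)) + Real.exp (2*σ₁*(T - t₀)))
    (α β αs βs : ℂ → ℂ)
    (hα : ∀ z, α z = 1 - ((Real.exp (-2*σ₁*(T - t₀)) / D : ℝ) : ℂ) *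
        (2*I*σ₁ / (z + I*σ₁)))
    (hαs : ∀ z, αs z = 1 - ((Real.exp (-2*σ₁*(T - t₀)) / D : ℝ) : ℂ) *
        (-2*I*σ₁ / (z - I*σ₁)))
    (hβ : ∀ z, β z = Complex.exp (I*(φ + N*Real.pi)) * (-2*I*σ₁ / (z + I*σ₁)) *
        Complex.exp (2*I*z*T) / (D : ℂ))
    (hβs : ∀ z, βs z = Complex.exp (-I*(φ + N*Real.pi)) * (2*I*σ₁ / (z - I*σ₁)) *
        Complex.exp (-2*I*z*T) / (D : ℂ))
    (z : ℂ) (hz₁ : z ≠ I*σ₁) (hz₂ : z ≠ -I*σ₁) :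
    α z * αs z + β z * βs z = 1 := by
  have hDpos : 0 < D := by rw [hD]; positivity
  have hD0 : (D : ℂ) ≠ 0 := by exact_mod_cast hDpos.ne'
  have h1 : z + I*σ₁ ≠ 0 := by intro h; apply hz₂; linear_combination h
  have h2 : z - I*σ₁ ≠ 0 := by intro h; apply hz₁; linear_combination h
  have hA : Complex.exp (I*(φ + N*Real.pi)) * Complex.exp (-I*(φ + N*Real.pi)) = 1 := by
    rw [← Complex.exp_add]; ring_nf; exact Complex.exp_zero
  have hB : Complex.exp (2*I*z*T) * Complex.exp (-2*I*z*T) = 1 := by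
    rw [← Complex.exp_add]; ring_nf; exact Complex.exp_zero
  have hPQ : ((Real.exp (-2*σ₁*(T - t₀)) : ℝ) : ℂ) * ((Real.exp (2*σ₁*(T - t₀)) : ℝ) : ℂ) = 1 := by
    rw [← Complex.ofReal_mul, ← Real.exp_add]; norm_num
  have hDPQ : (D : ℂ) = ((Real.exp (-2*σ₁*(T - t₀)) : ℝ) : ℂ) + ((Real.exp (2*σ₁*(T - t₀)) : ℝ) : ℂ) := by
    rw [hD]; push_cast; ring
  have hPD : ((Real.exp (-2*σ₁*(T - t₀)) / D : ℝ) : ℂ)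
      = ((Real.exp (-2*σ₁*(T - t₀)) : ℝ) : ℂ) / (D : ℂ) := Complex.ofReal_div _ _
  rw [hα, hαs, hβ, hβs, hPD]
  exact key_unitarity _ _ _ _ _ _ _ _ _ hD0 h1 h2 hPQ hA hB hDPQ
end

section
/- For real frequencies ω, the functions α and β satisfy |α(ω)|² + |β(ω)|² = 1. -/
open Complex Real

theorem alpha_beta_abs_sq_sum_one (σ₁ T t₀ φ : ℝ) (N : ℕ) (hσ : 0 < σ₁)
    (D : ℝ) (hD : D = Real.exp (-2*σ₁*(T - t₀)) + Real.exp (2*σ₁*(T - t₀)))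
    (α β : ℂ → ℂ)
    (hα : ∀ z, α z = 1 - ((Real.exp (-2*σ₁*(T - t₀)) / D : ℝ) : ℂ) *
        (2*I*σ₁ / (z + I*σ₁)))
    (hβ : ∀ z, β z = Complex.exp (I*(φ + N*Real.pi)) * (-2*I*σ₁ / (z + I*σ₁)) *
        Complex.exp (2*I*z*T) / (D : ℂ))
    (ω : ℝ) :
    ‖α (ω : ℂ)‖ ^ 2 + ‖β (ω : ℂ)‖ ^ 2 = 1 := by
  set e := Real.exp (-2*σ₁*(T - t₀)) with he
  set f := Real.exp (2*σ₁*(T - t₀)) with hf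
  have hef : e * f = 1 := by
    rw [he, hf, ← Real.exp_add]
    norm_num
  have he0 : 0 < e := Real.exp_pos _
  have hf0 : 0 < f := Real.exp_pos _
  have hD0 : 0 < D := by rw [hD]; positivity
  have hDc : (D : ℂ) ≠ 0 := Complex.ofReal_ne_zero.mpr hD0.ne'
  have hz : (ω : ℂ) + I*σ₁ ≠ 0 := by
    intro h
    have := congrArg Complex.im h
    simp at this
    exact hσ.ne' this
  have hα' : α ω = ((ω : ℂ) + (σ₁*(1 - 2*(e/D)) : ℝ) * I) / ((ω : ℂ) + I*σ₁) := by
    rw [hα, eq_div_iff hz]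
    push_cast
    field_simp
    ring_nf
  have hβabs : ‖β ω‖ ^ 2 = (2*σ₁)^2 / ((ω^2 + σ₁^2) * D^2) := by
    rw [hβ]
    rw [norm_div, norm_mul, norm_mul, norm_div]
    rw [Complex.norm_exp, Complex.norm_exp]
    have h1 : (I*(φ + N*Real.pi) : ℂ).re = 0 := by simp
    have h2 : (2*I*(ω:ℂ)*T : ℂ).re = 0 := by simp
    rw [h1, h2, Real.exp_zero]
    have h3 : ‖(-2*I*(σ₁:ℂ))‖ = 2*σ₁ := by
      simp [Complex.norm_def, Complex.normSq_apply]
      exact hσ.le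
    have h4 : ‖((ω:ℂ) + I*σ₁)‖ ^ 2 = ω^2 + σ₁^2 := by
      rw [Complex.sq_norm, Complex.normSq_apply]
      simp
      ring
    have h5 : ‖((D:ℝ) : ℂ)‖ = D := by
      rw [Complex.norm_real, Real.norm_eq_abs, abs_of_pos hD0]
    rw [h3, h5, one_mul, mul_one, div_pow, div_pow, h4, div_div]
  have hαabs : ‖α ω‖ ^ 2 = (ω^2 + (σ₁*(1 - 2*(e/D)))^2) / (ω^2 + σ₁^2) := by
    rw [hα', norm_div, div_pow, Complex.sq_norm, Complex.sq_norm,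
      Complex.normSq_apply, Complex.normSq_apply]
    simp
    ring_nf
  have hden : (0:ℝ) < ω^2 + σ₁^2 := by positivity
  have key : (1 - 2*(e/D))^2 + 4/D^2 = 1 := by
    field_simp
    nlinarith [hef, hD]
  rw [hαabs, hβabs]
  have step : (ω^2 + (σ₁*(1 - 2*(e/D)))^2) / (ω^2 + σ₁^2) + (2*σ₁)^2 / ((ω^2 + σ₁^2) * D^2)
      = (ω^2 + σ₁^2*((1 - 2*(e/D))^2 + 4/D^2)) / (ω^2 + σ₁^2) := by
    field_simp
    ring
  rw [step, key]
  field_simp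
end

section
/- The pair (v_1, v_2) given explicitly in terms of sech-type expressions solves the Zakharov–Shabat system with the one-soliton tail potential q(t) = −2σ_1 e^{−jφ_L − 2jω_1 t} sech(2σ_1(t−t_L)). -/
open Complex Real

set_option maxHeartbeats 1000000

theorem jost_solution_solves_ZS (σ₁ ω₁ φL tL : ℝ) (hσ : 0 < σ₁) (lam : ℂ)
    (hlam : lam ≠ (ω₁ : ℂ) - I*σ₁)
    (q v₁ v₂ : ℝ → ℂ)
    (hq : ∀ t, q t = -2*σ₁ * Complex.exp (-I*φL - 2*I*ω₁*t) /
        Complex.cosh (2*σ₁*(t - tL)))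
    (hv₁ : ∀ t, v₁ t = 1 - (Complex.exp (2*σ₁*((t:ℂ) - tL)) /
        (Complex.exp (2*σ₁*((t:ℂ) - tL)) + Complex.exp (-2*σ₁*((t:ℂ) - tL)))) *
        (2*I*σ₁ / (lam - ω₁ + I*σ₁)))
    (hv₂ : ∀ t, v₂ t = (2*I*σ₁ / (lam - ω₁ + I*σ₁)) *
        Complex.exp (I*φL + 2*I*ω₁*t) * Complex.exp (-2*I*lam*t) /
        (Complex.exp (2*σ₁*((t:ℂ) - tL)) + Complex.exp (-2*σ₁*((t:ℂ) - tL)))) :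
    ∀ t : ℝ,
      HasDerivAt v₁ (q t * Complex.exp (2*I*lam*t) * v₂ t) t ∧
      HasDerivAt v₂ (-(starRingEnd ℂ) (q t) * Complex.exp (-2*I*lam*t) * v₁ t) t := by
  have hden : lam - (ω₁:ℂ) + I*σ₁ ≠ 0 := by
    intro h
    apply hlam
    linear_combination h
  set c : ℂ := 2*I*σ₁ / (lam - ω₁ + I*σ₁) with hc
  clear_value c
  intro t
  set E : ℝ → ℂ := fun s : ℝ => Complex.exp (2*σ₁*((s:ℂ) - tL)) with hE
  set Em : ℝ → ℂ := fun s : ℝ => Complex.exp (-2*σ₁*((s:ℂ) - tL)) with hEm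
  set D : ℝ → ℂ := fun s : ℝ => E s + Em s with hD
  have hDpos : ∀ s : ℝ, D s = ((Real.exp (2*σ₁*(s - tL)) + Real.exp (-(2*σ₁*(s - tL))) : ℝ) : ℂ) := by
    intro s
    have h1 : (2*(σ₁:ℂ)*((s:ℂ) - (tL:ℂ))) = ((2*σ₁*(s - tL) : ℝ) : ℂ) := by push_cast; ring
    have h2 : (-2*(σ₁:ℂ)*((s:ℂ) - (tL:ℂ))) = ((-(2*σ₁*(s - tL)) : ℝ) : ℂ) := by push_cast; ring
    simp only [hD, hE, hEm, h1, h2, ← Complex.ofReal_exp, ← Complex.ofReal_add]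
  have hDne : ∀ s : ℝ, D s ≠ 0 := by
    intro s
    rw [hDpos s]
    exact_mod_cast ne_of_gt (by positivity)
  have hdE : HasDerivAt E ((2*σ₁) * E t) t := by
    have h1 : HasDerivAt (fun z : ℂ => Complex.exp (2*σ₁*(z - tL)))
        ((2*σ₁) * Complex.exp (2*σ₁*((t:ℂ) - tL))) (t:ℂ) := by
      have := (((hasDerivAt_id (t:ℂ)).sub_const (tL:ℂ)).const_mul ((2*σ₁ : ℂ))).cexp
      simpa [mul_comm] using this
    exact h1.comp_ofReal
  have hdEm : HasDerivAt Em ((-(2*σ₁)) * Em t) t := by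
    have h1 : HasDerivAt (fun z : ℂ => Complex.exp (-2*σ₁*(z - tL)))
        ((-(2*σ₁)) * Complex.exp (-2*σ₁*((t:ℂ) - tL))) (t:ℂ) := by
      have := (((hasDerivAt_id (t:ℂ)).sub_const (tL:ℂ)).const_mul ((-2*σ₁ : ℂ))).cexp
      simpa [mul_comm] using this
    exact h1.comp_ofReal
  have hdD : HasDerivAt D ((2*σ₁) * E t + (-(2*σ₁)) * Em t) t := hdE.add hdEm
  have hv₁' : v₁ = fun s : ℝ => 1 - (E s / D s) * c := by
    funext s; rw [hv₁ s]
  have hv₂' : v₂ = fun s : ℝ =>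
      c * Complex.exp (I*φL + 2*I*ω₁*(s:ℂ)) * Complex.exp (-2*I*lam*(s:ℂ)) / D s := by
    funext s; rw [hv₂ s]
  have hEmE : Em t = (E t)⁻¹ := by
    simp only [hE, hEm]
    rw [show (-2*(σ₁:ℂ)*((t:ℂ)-tL)) = -(2*σ₁*((t:ℂ)-tL)) by ring, Complex.exp_neg]
  have hEne : E t ≠ 0 := Complex.exp_ne_zero _
  have hcosh : Complex.cosh (2*(σ₁:ℂ)*((t:ℂ) - (tL:ℂ))) = D t / 2 := by
    have h2 := Complex.two_cosh (2*(σ₁:ℂ)*((t:ℂ) - (tL:ℂ)))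
    have h3 : Complex.exp (-(2*(σ₁:ℂ)*((t:ℂ) - (tL:ℂ)))) = Em t := by
      simp only [hEm]
      congr 1
      ring
    rw [eq_div_iff (two_ne_zero' ℂ), mul_comm, h2, h3]
  constructor
  · rw [hv₁']
    have hd := ((hdE.div hdD (hDne t)).mul_const c).const_sub 1
    refine hd.congr_deriv (Eq.symm ?_)
    rw [hq, hv₂']
    simp only
    rw [hcosh, hEmE]
    have hq1 : Complex.exp (-I*(φL:ℂ) - 2*I*(ω₁:ℂ)*(t:ℂ)) = (Complex.exp (I*φL + 2*I*ω₁*(t:ℂ)))⁻¹ := by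
      rw [show (-I*(φL:ℂ) - 2*I*(ω₁:ℂ)*(t:ℂ)) = -(I*φL + 2*I*ω₁*(t:ℂ)) by ring, Complex.exp_neg]
    have hq2 : Complex.exp (-2*I*lam*(t:ℂ)) = (Complex.exp (2*I*lam*(t:ℂ)))⁻¹ := by
      rw [show (-2*I*lam*(t:ℂ)) = -(2*I*lam*(t:ℂ)) by ring, Complex.exp_neg]
    rw [hq1, hq2]
    simp only [hD, hEmE]
    have hDt : E t + (E t)⁻¹ ≠ 0 := by rw [← hEmE]; exact hDne t
    have hX1 : (E t)^2 + 1 ≠ 0 := by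
      intro h
      apply hDt
      field_simp
      linear_combination h
    have hA : Complex.exp (2*I*lam*(t:ℂ)) ≠ 0 := Complex.exp_ne_zero _
    have hB : Complex.exp (I*(φL:ℂ) + 2*I*(ω₁:ℂ)*(t:ℂ)) ≠ 0 := Complex.exp_ne_zero _
    have hfac : E t + (E t)⁻¹ = ((E t)^2 + 1)/E t := by
      field_simp
    rw [hfac]
    field_simp
    ring
  · rw [hv₂']
    have hdP : HasDerivAt (fun s : ℝ => Complex.exp (I*φL + 2*I*ω₁*(s:ℂ)))
        ((2*I*ω₁) * Complex.exp (I*φL + 2*I*ω₁*(t:ℂ))) t := by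
      have h1 : HasDerivAt (fun z : ℂ => Complex.exp (I*φL + 2*I*ω₁*z))
          ((2*I*ω₁) * Complex.exp (I*φL + 2*I*ω₁*(t:ℂ))) (t:ℂ) := by
        have := (((hasDerivAt_id (t:ℂ)).const_mul ((2*I*ω₁ : ℂ))).const_add (I*(φL:ℂ))).cexp
        simpa [mul_comm] using this
      exact h1.comp_ofReal
    have hdM : HasDerivAt (fun s : ℝ => Complex.exp (-2*I*lam*(s:ℂ)))
        ((-2*I*lam) * Complex.exp (-2*I*lam*(t:ℂ))) t := by
      have h1 : HasDerivAt (fun z : ℂ => Complex.exp (-2*I*lam*z))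
          ((-2*I*lam) * Complex.exp (-2*I*lam*(t:ℂ))) (t:ℂ) := by
        have := ((hasDerivAt_id (t:ℂ)).const_mul ((-2*I*lam : ℂ))).cexp
        simpa [mul_comm] using this
      exact h1.comp_ofReal
    have hd := ((hdP.const_mul c).mul hdM).div hdD (hDne t)
    refine hd.congr_deriv (Eq.symm ?_)
    rw [hq, hv₁']
    simp only
    rw [hcosh]
    have hconj : (starRingEnd ℂ) (-2*(σ₁:ℂ) * Complex.exp (-I*(φL:ℂ) - 2*I*(ω₁:ℂ)*(t:ℂ)) / (D t / 2)) =
        -2*(σ₁:ℂ) * Complex.exp (I*(φL:ℂ) + 2*I*(ω₁:ℂ)*(t:ℂ)) / (D t / 2) := by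
      have harg : (starRingEnd ℂ) (-I*(φL:ℂ) - 2*I*(ω₁:ℂ)*(t:ℂ)) = I*(φL:ℂ) + 2*I*(ω₁:ℂ)*(t:ℂ) := by
        simp only [map_sub, map_neg, map_mul, map_ofNat, Complex.conj_I, Complex.conj_ofReal]
        ring
      rw [hDpos t, map_div₀, map_mul, ← Complex.exp_conj, harg]
      simp only [map_mul, map_neg, map_ofNat, Complex.conj_ofReal, map_div₀]
    rw [hconj, hEmE]
    simp only [hD, hEmE]
    have hDt : E t + (E t)⁻¹ ≠ 0 := by rw [← hEmE]; exact hDne t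
    have hX1 : (E t)^2 + 1 ≠ 0 := by
      intro h
      apply hDt
      field_simp
      linear_combination h
    have hA : Complex.exp (2*I*lam*(t:ℂ)) ≠ 0 := Complex.exp_ne_zero _
    have hM : Complex.exp (-2*I*lam*(t:ℂ)) ≠ 0 := Complex.exp_ne_zero _
    have hB : Complex.exp (I*(φL:ℂ) + 2*I*(ω₁:ℂ)*(t:ℂ)) ≠ 0 := Complex.exp_ne_zero _
    have hfac : E t + (E t)⁻¹ = ((E t)^2 + 1)/E t := by
      field_simp
    rw [hfac, hc]
    simp only [Pi.mul_apply]
    have hI2 : (I:ℂ)^2 = -1 := Complex.I_sq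
    have hI3 : (I:ℂ)^3 = -I := by rw [pow_succ, hI2]; ring
    have hI4 : (I:ℂ)^4 = 1 := by rw [pow_succ, hI3]; simp [Complex.I_mul_I]
    field_simp
    ring_nf
    simp only [hI2, hI3, hI4]
    have hden' : (σ₁:ℂ)*I + lam - ω₁ ≠ 0 := by rw [show (σ₁:ℂ)*I + lam - ω₁ = lam - ω₁ + I*σ₁ by ring]; exact hden
    field_simp
    ring
end
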